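/- Let A be a unital C*-algebra and let a, b ∈ A satisfy σ(a·x) = σ(b·x) for all x ∈ A. If a is self-adjoint (a = a*), then a = b. -/

import Mathlib

section Aux

variable {A : Type*} [NormedRing A] [StarRing A] [CStarRing A] [CompleteSpace A]
    [NormedAlgebra ℂ A] [StarModule ℂ A]

private lemma aux_one_sub_mul_comm {x y : A} (h : IsUnit (1 - x * y)) :
    IsUnit (1 - y * x) := by
  refine ⟨⟨1 - y * x, 1 + y * h.unit.inv * x, ?_, ?_⟩, rfl⟩
  · calc
      (1 - y * x) * (1 + y * (IsUnit.unit h).inv * x) =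
          1 - y * x + y * ((1 - x * y) * h.unit.inv) * x := by noncomm_ring
      _ = 1 := by simp only [Units.inv_eq_val_inv, IsUnit.mul_val_inv, mul_one, sub_add_cancel]
  · calc
      (1 + y * (IsUnit.unit h).inv * x) * (1 - y * x) =
          1 - y * x + y * (h.unit.inv * (1 - x * y)) * x := by noncomm_ring
      _ = 1 := by simp only [Units.inv_eq_val_inv, IsUnit.val_inv_mul, mul_one, sub_add_cancel]

/-- Key lemma: if `1 - p x` unit implies `1 - q x` unit for all `x`, then whenever
`λ + p y` is a unit (with `λ ≠ 0`), so is `λ + p y - q y`. -/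
private lemma aux_key {p q : A} (hpq : ∀ x : A, IsUnit (1 - p * x) → IsUnit (1 - q * x))
    {lam : ℂ} (hlam : lam ≠ 0) (y : A) (hy : IsUnit (algebraMap ℂ A lam + p * y)) :
    IsUnit (algebraMap ℂ A lam + p * y - q * y) := by
  obtain ⟨u, hu⟩ := hy
  have h1 : algebraMap ℂ A lam * ↑u⁻¹ + p * (y * ↑u⁻¹) = 1 := by
    rw [← mul_assoc, ← add_mul, ← hu, u.mul_inv]
  have hunit : IsUnit (1 - p * (y * ↑u⁻¹)) := by
    rw [show (1 : A) - p * (y * ↑u⁻¹) = algebraMap ℂ A lam * ↑u⁻¹ from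
      (eq_sub_of_add_eq h1).symm]
    exact ((isUnit_iff_ne_zero.mpr hlam).map (algebraMap ℂ A)).mul u⁻¹.isUnit
  have h2 := hpq _ hunit
  have h3 : (1 - q * (y * ↑u⁻¹)) * ↑u = algebraMap ℂ A lam + p * y - q * y := by
    rw [sub_mul, one_mul, mul_assoc, mul_assoc, u.inv_mul, mul_one, hu]
  exact h3 ▸ h2.mul u.isUnit

end Aux

/-- Theorem 2.6, Claim 3: In a unital C*-algebra, if `σ(a x) = σ(b x)` for all
`x` and `a` is self-adjoint, then `a = b`. -/
theorem eq_of_spectrum_mul_eq_selfAdjoint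
    {A : Type*} [NormedRing A] [StarRing A] [CStarRing A] [CompleteSpace A]
    [NormedAlgebra ℂ A] [StarModule ℂ A]
    (a b : A)
    (h : ∀ x : A, spectrum ℂ (a * x) = spectrum ℂ (b * x))
    (ha : a = star a) :
    a = b := by
  letI : CStarAlgebra A := { }
  have haa : IsSelfAdjoint (a * a) := by
    nth_rewrite 1 [ha]; exact IsSelfAdjoint.star_mul_self a
  -- membership at 1 reformulation
  have mem1 : ∀ w : A, (1 : ℂ) ∉ spectrum ℂ w ↔ IsUnit (1 - w) := fun w => by
    rw [spectrum.notMem_iff, map_one]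
  have hiff : ∀ x : A, IsUnit (1 - a * x) ↔ IsUnit (1 - b * x) := fun x => by
    rw [← mem1, ← mem1, h x]
  -- star version
  have hiffstar : ∀ x : A, IsUnit (1 - a * x) ↔ IsUnit (1 - star b * x) := by
    intro x
    have e1 : star (1 - x * a) = 1 - a * star x := by
      rw [star_sub, star_one, star_mul, ← ha]
    have e2 : star (1 - star x * b) = 1 - star b * x := by
      rw [star_sub, star_one, star_mul, star_star]
    constructor
    · intro hu
      have h1 : IsUnit (star (1 - x * a)) := isUnit_star.mpr (aux_one_sub_mul_comm hu)
      rw [e1] at h1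
      have h2 : IsUnit (1 - star x * b) := aux_one_sub_mul_comm ((hiff (star x)).mp h1)
      have h3 := isUnit_star.mpr h2
      rwa [e2] at h3
    · intro hu
      have h1 : IsUnit (star (1 - star b * x)) := isUnit_star.mpr hu
      rw [← e2, star_star] at h1
      have h2 : IsUnit (1 - b * star x) := aux_one_sub_mul_comm h1
      have h3 : IsUnit (star (1 - x * a)) := by
        rw [e1]; exact (hiff (star x)).mpr h2
      exact aux_one_sub_mul_comm (isUnit_star.mp h3)
  -- scaling helper
  have hsmul : ∀ (lam : ℂ), lam ≠ 0 → ∀ p x : A,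
      (IsUnit (algebraMap ℂ A lam - p * x) ↔ IsUnit (1 - p * (lam⁻¹ • x))) := by
    intro lam hlam p x
    have e : algebraMap ℂ A lam - p * x = (Units.mk0 lam hlam) • (1 - p * (lam⁻¹ • x)) := by
      show algebraMap ℂ A lam - p * x = lam • (1 - p * (lam⁻¹ • x))
      rw [smul_sub, Algebra.algebraMap_eq_smul_one]
      congr 1
      rw [mul_smul_comm, smul_smul, mul_inv_cancel₀ hlam, one_smul]
    rw [e, isUnit_smul_iff]
  -- positivity: σ(a²) ⊆ [0,∞)
  have hP : ∀ lam : ℂ, lam ∈ spectrum ℂ (a * a) → -lam ∈ spectrum ℂ (a * a) → lam = 0 := by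
    have hre : ∀ lam : ℂ, lam ∈ spectrum ℂ (a * a) → 0 ≤ lam.re := by
      intro lam hlam
      have h1 : lam = (lam.re : ℂ) := haa.mem_spectrum_eq_re hlam
      have h2 : algebraMap ℝ ℂ lam.re ∈ spectrum ℂ (a * a) := by
        rw [Complex.coe_algebraMap]; exact h1 ▸ hlam
      have h3 : lam.re ∈ spectrum ℝ (a * a) := (spectrum.algebraMap_mem_iff ℂ).mp h2
      have h4 : lam.re ∈ spectrum ℝ (star a * a) := by rwa [← ha]
      exact spectrum_star_mul_self_nonneg lam.re h4
    intro lam h1 h2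
    have g1 := hre lam h1
    have g2 := hre (-lam) h2
    rw [Complex.neg_re] at g2
    have h3 : lam = (lam.re : ℂ) := haa.mem_spectrum_eq_re h1
    rw [h3]
    norm_num
    linarith
  set sc : A := star b - a with hsc
  -- Step B*: σ(sc * a) ⊆ {0}
  have hB : ∀ lam : ℂ, lam ∈ spectrum ℂ (sc * a) → lam = 0 := by
    intro lam hlam
    by_contra hlam0
    have hne : ¬IsUnit (algebraMap ℂ A lam - sc * a) := spectrum.mem_iff.mp hlam
    -- (i) -lam ∈ σ(a*a)
    have hi : -lam ∈ spectrum ℂ (a * a) := by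
      rw [spectrum.mem_iff]
      intro hu
      have hu' : IsUnit (algebraMap ℂ A lam + a * a) := by
        have : algebraMap ℂ A (-lam) - a * a = -(algebraMap ℂ A lam + a * a) := by
          rw [map_neg]; noncomm_ring
        rw [this] at hu
        exact (IsUnit.neg_iff _).mp hu
      have := aux_key (fun x => (hiffstar x).mp) hlam0 a hu'
      apply hne
      have e : algebraMap ℂ A lam + a * a - star b * a = algebraMap ℂ A lam - sc * a := by
        rw [hsc]; noncomm_ring
      rwa [e] at this
    -- (ii) lam ∈ σ(a*a)
    have hii : lam ∈ spectrum ℂ (a * a) := by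
      have hbs : ¬IsUnit (algebraMap ℂ A (-lam) + star b * a) := by
        intro hu
        have := aux_key (fun x => (hiffstar x).mpr) (neg_ne_zero.mpr hlam0) a hu
        apply hne
        have e : algebraMap ℂ A (-lam) + star b * a - a * a
            = -(algebraMap ℂ A lam - sc * a) := by
          rw [map_neg, hsc]; noncomm_ring
        rw [e] at this
        exact (IsUnit.neg_iff _).mp this
      have hmem : lam ∈ spectrum ℂ (star b * a) := by
        rw [spectrum.mem_iff]
        intro hu
        apply hbs
        have e : algebraMap ℂ A (-lam) + star b * a = -(algebraMap ℂ A lam - star b * a) := by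
          rw [map_neg]; noncomm_ring
        rw [e]
        exact (IsUnit.neg_iff _).mpr hu
      -- transfer via hiffstar
      rw [spectrum.mem_iff] at hmem ⊢
      intro hu
      apply hmem
      rw [hsmul lam hlam0] at hu ⊢
      exact (hiffstar _).mp hu
    exact hlam0 (hP lam hii hi)
  -- Step C: σ(a * sc) ⊆ {0}
  have hC : ∀ lam : ℂ, lam ∈ spectrum ℂ (a * sc) → lam = 0 := by
    intro lam hlam
    by_contra hlam0
    have : lam ∈ spectrum ℂ (a * sc) \ {0} := ⟨hlam, hlam0⟩
    rw [spectrum.nonzero_mul_comm] at this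
    exact hlam0 (hB lam this.1)
  -- Step D: σ((b-a) * sc) ⊆ {0}
  have hD : ∀ lam : ℂ, lam ∈ spectrum ℂ ((b - a) * sc) → lam = 0 := by
    intro lam hlam
    by_contra hlam0
    have hne : ¬IsUnit (algebraMap ℂ A lam - (b - a) * sc) := spectrum.mem_iff.mp hlam
    have hnu : ¬IsUnit (algebraMap ℂ A lam + a * sc) := by
      intro hu
      have := aux_key (fun x => (hiff x).mp) hlam0 sc hu
      apply hne
      have e : algebraMap ℂ A lam + a * sc - b * sc = algebraMap ℂ A lam - (b - a) * sc := by
        noncomm_ring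
      rwa [e] at this
    have hmem : -lam ∈ spectrum ℂ (a * sc) := by
      rw [spectrum.mem_iff]
      intro hu
      apply hnu
      have e : algebraMap ℂ A (-lam) - a * sc = -(algebraMap ℂ A lam + a * sc) := by
        rw [map_neg]; noncomm_ring
      rw [e] at hu
      exact (IsUnit.neg_iff _).mp hu
    exact hlam0 (neg_eq_zero.mp (hC (-lam) hmem))
  -- Step E: conclude b - a = 0
  have hscstar : sc = star (b - a) := by rw [hsc, star_sub, ← ha]
  have hsa : IsSelfAdjoint ((b - a) * sc) := by
    rw [hscstar]; exact IsSelfAdjoint.mul_star_self (b - a)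
  have hrad : spectralRadius ℂ ((b - a) * sc) = 0 := by
    rw [spectralRadius]
    refine le_antisymm ?_ zero_le
    refine iSup₂_le fun k hk => ?_
    rw [hD k hk]
    simp
  have hnorm : ‖(b - a) * sc‖₊ = 0 := by
    have := hsa.spectralRadius_eq_nnnorm
    rw [hrad] at this
    exact_mod_cast this.symm
  have hzero : (b - a) * star (b - a) = 0 := by
    rw [← hscstar]
    exact nnnorm_eq_zero.mp hnorm
  have : b - a = 0 := (CStarRing.mul_star_self_eq_zero_iff _).mp hzero
  rw [← sub_eq_zero]
  rw [← neg_sub b a, this, neg_zero]
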